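/- Let Φ denote the cumulative distribution function and φ the probability density function of the standard Gaussian distribution N(0,1), and define G(x) := (x·φ(x)·Φ(x) + φ(x)²) / Φ(x)². Then G(x) → 1 as x → −∞ and G(x) → 0 as x → +∞. -/

import Mathlib

open Filter MeasureTheory Real Set


/-- CDF of the standard Gaussian distribution `N(0,1)`. -/
noncomputable def gaussCDF (x : ℝ) : ℝ :=
  ((ProbabilityTheory.gaussianReal 0 1) (Set.Iic x)).toReal

/-- PDF of the standard Gaussian distribution `N(0,1)`. -/
noncomputable def gaussPDF (x : ℝ) : ℝ := ProbabilityTheory.gaussianPDFReal 0 1 x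

/-- `G(x) = (x φ(x) Φ(x) + φ(x)²) / Φ(x)²`. -/
noncomputable def G (x : ℝ) : ℝ :=
  (x * gaussPDF x * gaussCDF x + (gaussPDF x) ^ 2) / (gaussCDF x) ^ 2

lemma gaussPDF_eq (x : ℝ) : gaussPDF x = (Real.sqrt (2*Real.pi))⁻¹ * Real.exp (-x^2/2) := by
  simp [gaussPDF, ProbabilityTheory.gaussianPDFReal]

lemma gaussPDF_pos (x : ℝ) : 0 < gaussPDF x :=
  ProbabilityTheory.gaussianPDFReal_pos 0 1 x one_ne_zero

lemma continuous_gaussPDF : Continuous gaussPDF := by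
  simp only [funext gaussPDF_eq]
  continuity

lemma hasDerivAt_gaussPDF (x : ℝ) : HasDerivAt gaussPDF (-x * gaussPDF x) x := by
  simp only [funext gaussPDF_eq, gaussPDF_eq]
  have h : HasDerivAt (fun y : ℝ => -y^2/2) (-x) x := by
    have := ((hasDerivAt_pow 2 x).neg).div_const 2
    refine this.congr_deriv ?_; ring
  have := (h.exp).const_mul (Real.sqrt (2*Real.pi))⁻¹
  refine this.congr_deriv ?_; ring

lemma integrable_gaussPDF : Integrable gaussPDF :=
  ProbabilityTheory.integrable_gaussianPDFReal 0 1

lemma gaussCDF_eq_integral (x : ℝ) : gaussCDF x = ∫ t in Set.Iic x, gaussPDF t := by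
  rw [gaussCDF, ProbabilityTheory.gaussianReal_apply_eq_integral 0 one_ne_zero,
    ENNReal.toReal_ofReal]
  · rfl
  · exact setIntegral_nonneg measurableSet_Iic fun t _ =>
      (gaussPDF_pos t).le

lemma hasDerivAt_gaussCDF (x : ℝ) : HasDerivAt gaussCDF (gaussPDF x) x := by
  have key : ∀ y : ℝ, gaussCDF y = gaussCDF 0 + ∫ t in (0:ℝ)..y, gaussPDF t := by
    intro y
    rw [gaussCDF_eq_integral, gaussCDF_eq_integral,
      ← intervalIntegral.integral_Iic_sub_Iic (integrable_gaussPDF.integrableOn)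
        (integrable_gaussPDF.integrableOn)]
    ring
  have h : HasDerivAt (fun y : ℝ => gaussCDF 0 + ∫ t in (0:ℝ)..y, gaussPDF t)
      (gaussPDF x) x := (intervalIntegral.integral_hasDerivAt_right
    (integrable_gaussPDF.intervalIntegrable)
    (continuous_gaussPDF.stronglyMeasurable.stronglyMeasurableAtFilter)
    continuous_gaussPDF.continuousAt).const_add _
  exact h.congr_of_eventuallyEq (Filter.Eventually.of_forall key)

lemma gaussCDF_pos (x : ℝ) : 0 < gaussCDF x := by
  rw [gaussCDF]
  have hne : (ProbabilityTheory.gaussianReal 0 1) (Set.Iic x) ≠ 0 := by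
    intro h
    have := (ProbabilityTheory.gaussianReal_absolutelyContinuous' 0 one_ne_zero) h
    simp [Real.volume_Iic] at this
  have hlt : (ProbabilityTheory.gaussianReal 0 1) (Set.Iic x) < ⊤ :=
    lt_of_le_of_lt (measure_mono (Set.subset_univ _)) (by simp)
  exact ENNReal.toReal_pos hne hlt.ne

lemma tendsto_gaussCDF_atTop : Tendsto gaussCDF atTop (nhds 1) := by
  have h := tendsto_measure_Iic_atTop (ProbabilityTheory.gaussianReal 0 1)
  simp only [measure_univ] at h
  have := (ENNReal.tendsto_toReal (by norm_num : (1:ENNReal) ≠ ⊤)).comp h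
  delta gaussCDF
  simpa [gaussCDF, Function.comp_def] using this

lemma tendsto_gaussCDF_atBot : Tendsto gaussCDF atBot (nhds 0) := by
  have hempty : ⋂ x : ℝ, Set.Iic x = (∅ : Set ℝ) := by
    ext y
    simp only [Set.mem_iInter, Set.mem_Iic, Set.mem_empty_iff_false, iff_false, not_forall]
    exact ⟨y - 1, by push_neg; linarith⟩
  have h := tendsto_measure_iInter_atBot (μ := ProbabilityTheory.gaussianReal 0 1)
    (s := fun x : ℝ => Set.Iic x) (fun i => measurableSet_Iic.nullMeasurableSet)
    (fun a b hab => Set.Iic_subset_Iic.2 hab) ⟨0, (measure_lt_top _ _).ne⟩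
  rw [hempty] at h
  simp only [measure_empty] at h
  have := (ENNReal.tendsto_toReal (by norm_num : (0:ENNReal) ≠ ⊤)).comp h
  delta gaussCDF
  simpa [gaussCDF, Function.comp_def] using this

lemma tendsto_gaussPDF_cocompact : Tendsto gaussPDF (Filter.cocompact ℝ) (nhds 0) := by
  have h := (tendsto_rpow_abs_mul_exp_neg_mul_sq_cocompact (by norm_num : (0:ℝ) < 1/2) 0).const_mul
    (Real.sqrt (2*Real.pi))⁻¹
  simp only [Real.rpow_zero, one_mul, mul_zero] at h
  refine h.congr fun x => ?_
  rw [gaussPDF_eq]; ring_nf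

lemma tendsto_mul_gaussPDF_cocompact :
    Tendsto (fun x => x * gaussPDF x) (Filter.cocompact ℝ) (nhds 0) := by
  have h := (tendsto_rpow_abs_mul_exp_neg_mul_sq_cocompact (by norm_num : (0:ℝ) < 1/2) 1).const_mul
    (Real.sqrt (2*Real.pi))⁻¹
  simp only [mul_zero] at h
  refine squeeze_zero_norm (fun x => ?_) h
  rw [Real.norm_eq_abs, abs_mul, gaussPDF_eq, abs_mul, abs_of_pos (Real.exp_pos _),
    abs_of_nonneg (inv_nonneg.2 (Real.sqrt_nonneg _)), Real.rpow_one]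
  have : -x^2/2 = -(1/2) * x^2 := by ring
  rw [this]; ring_nf; exact le_refl _

lemma tendsto_gaussPDF_atBot : Tendsto gaussPDF atBot (nhds 0) :=
  tendsto_gaussPDF_cocompact.mono_left (by rw [cocompact_eq_atBot_atTop]; exact le_sup_left)

lemma tendsto_gaussPDF_atTop : Tendsto gaussPDF atTop (nhds 0) :=
  tendsto_gaussPDF_cocompact.mono_left (by rw [cocompact_eq_atBot_atTop]; exact le_sup_right)

lemma tendsto_mul_gaussPDF_atTop : Tendsto (fun x => x * gaussPDF x) atTop (nhds 0) :=
  tendsto_mul_gaussPDF_cocompact.mono_left (by rw [cocompact_eq_atBot_atTop]; exact le_sup_right)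

/-- If `F` has nonnegative derivative on `Iio 0` and tends to `0` at `-∞`, then `F ≥ 0` there. -/
lemma nonneg_of_deriv (F q : ℝ → ℝ) (hd : ∀ x < 0, HasDerivAt F (q x) x)
    (hq : ∀ x < 0, 0 ≤ q x) (h0 : Tendsto F atBot (nhds 0)) :
    ∀ x < 0, 0 ≤ F x := by
  intro x hx
  have hmono : MonotoneOn F (Set.Iio 0) := by
    refine monotoneOn_of_deriv_nonneg (convex_Iio 0)
      (fun y hy => ((hd y hy).continuousAt).continuousWithinAt) ?_ ?_
    · intro y hy
      rw [interior_Iio] at hy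
      exact ((hd y hy).differentiableAt).differentiableWithinAt
    · intro y hy
      rw [interior_Iio] at hy
      rw [(hd y hy).deriv]
      exact hq y hy
  refine le_of_tendsto h0 ?_
  filter_upwards [eventually_le_atBot x, eventually_lt_atBot (0:ℝ)] with y hyx hy0
  exact hmono hy0 hx hyx

lemma inv_atBot : Tendsto (fun x : ℝ => x⁻¹) atBot (nhds 0) := by
  have := ((tendsto_inv_atTop_zero (𝕜 := ℝ)).comp tendsto_neg_atBot_atTop).neg
  simp only [neg_zero] at this
  exact this.congr fun x => by simp [Function.comp, inv_neg]

lemma tendsto_inv_pow_atBot (n : ℕ) (hn : n ≠ 0) :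
    Tendsto (fun x : ℝ => (x^n)⁻¹) atBot (nhds 0) := by
  have := inv_atBot.pow n
  rw [zero_pow hn] at this
  exact this.congr fun x => inv_pow x n

lemma millsA : ∀ x < 0, gaussCDF x ≤ gaussPDF x * (-x⁻¹) := by
  have h := nonneg_of_deriv (fun x => gaussPDF x * (-x⁻¹) - gaussCDF x)
    (fun x => gaussPDF x * (x^2)⁻¹) ?_ ?_ ?_
  · intro x hx; have := h x hx; linarith
  · intro x hx
    have hd := ((hasDerivAt_gaussPDF x).mul ((hasDerivAt_inv hx.ne).neg)).sub
      (hasDerivAt_gaussCDF x)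
    refine hd.congr_deriv ?_
    have hx2 : x^2 ≠ 0 := pow_ne_zero _ hx.ne
    have hx0 : x ≠ 0 := hx.ne
    simp only [Pi.neg_apply, Pi.add_apply, Pi.sub_apply, Pi.inv_apply]
    field_simp
    ring
  · intro x hx
    exact mul_nonneg (gaussPDF_pos x).le (by positivity)
  · have := (tendsto_gaussPDF_atBot.mul inv_atBot.neg).sub tendsto_gaussCDF_atBot
    simpa using this

lemma millsB : ∀ x < 0, gaussPDF x * (-x⁻¹ + (x^3)⁻¹) ≤ gaussCDF x := by
  have h := nonneg_of_deriv (fun x => gaussCDF x - gaussPDF x * (-x⁻¹ + (x^3)⁻¹))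
    (fun x => gaussPDF x * (3 * (x^4)⁻¹)) ?_ ?_ ?_
  · intro x hx; have := h x hx; linarith
  · intro x hx
    have h3 : x^3 ≠ 0 := pow_ne_zero _ hx.ne
    have hd := (hasDerivAt_gaussCDF x).sub
      ((hasDerivAt_gaussPDF x).mul (((hasDerivAt_inv hx.ne).neg).add
        ((hasDerivAt_pow 3 x).inv h3)))
    refine hd.congr_deriv ?_
    have hx2 : x^2 ≠ 0 := pow_ne_zero _ hx.ne
    have hx0 : x ≠ 0 := hx.ne
    simp only [Pi.neg_apply, Pi.add_apply, Pi.sub_apply, Pi.inv_apply]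
    field_simp
    ring
  · intro x hx; exact mul_nonneg (gaussPDF_pos x).le (by positivity)
  · have := tendsto_gaussCDF_atBot.sub
      (tendsto_gaussPDF_atBot.mul (inv_atBot.neg.add (tendsto_inv_pow_atBot 3 (by norm_num))))
    simpa using this

lemma millsC : ∀ x < 0, gaussCDF x ≤ gaussPDF x * (-x⁻¹ + (x^3)⁻¹ - 3 * (x^5)⁻¹) := by
  have h := nonneg_of_deriv
    (fun x => gaussPDF x * (-x⁻¹ + (x^3)⁻¹ - 3 * (x^5)⁻¹) - gaussCDF x)
    (fun x => gaussPDF x * (15 * (x^6)⁻¹)) ?_ ?_ ?_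
  · intro x hx; have := h x hx; linarith
  · intro x hx
    have h3 : x^3 ≠ 0 := pow_ne_zero _ hx.ne
    have h5 : x^5 ≠ 0 := pow_ne_zero _ hx.ne
    have hd := ((hasDerivAt_gaussPDF x).mul ((((hasDerivAt_inv hx.ne).neg).add
        ((hasDerivAt_pow 3 x).inv h3)).sub (((hasDerivAt_pow 5 x).inv h5).const_mul 3))).sub
      (hasDerivAt_gaussCDF x)
    refine hd.congr_deriv ?_
    have hx2 : x^2 ≠ 0 := pow_ne_zero _ hx.ne
    have hx0 : x ≠ 0 := hx.ne
    simp only [Pi.neg_apply, Pi.add_apply, Pi.sub_apply, Pi.inv_apply]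
    field_simp
    ring
  · intro x hx; exact mul_nonneg (gaussPDF_pos x).le (by positivity)
  · have := (tendsto_gaussPDF_atBot.mul ((inv_atBot.neg.add
      (tendsto_inv_pow_atBot 3 (by norm_num))).sub ((tendsto_inv_pow_atBot 5 (by norm_num)).const_mul 3))).sub
      tendsto_gaussCDF_atBot
    simpa using this

lemma G_bounds {x : ℝ} (hx : x ≤ -2) :
    (x^4 - 3*x^2)/(x^4 - x^2 + 3) ≤ G x ∧ G x ≤ x^4/(x^2-1)^2 := by
  have hx0 : x < 0 := by linarith
  have hne : x ≠ 0 := hx0.ne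
  have hφ := gaussPDF_pos x
  have hΦ := gaussCDF_pos x
  set φ := gaussPDF x with hφdef
  set Φ := gaussCDF x with hΦdef
  have hnegx : (0:ℝ) ≤ -x := by linarith
  have h3 : (0:ℝ) ≤ -x^3 := by nlinarith [mul_nonneg hnegx (sq_nonneg x)]
  have h5 : (0:ℝ) ≤ -x^5 := by nlinarith [mul_nonneg (mul_nonneg hnegx (sq_nonneg x)) (sq_nonneg x)]
  have hx2 : (0:ℝ) < x^2 - 1 := by nlinarith [sq_nonneg (x+2)]
  -- cleared inequalities
  have hi : -x * Φ ≤ φ := by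
    calc -x * Φ ≤ -x * (φ * (-x⁻¹)) :=
          mul_le_mul_of_nonneg_left (millsA x hx0) hnegx
      _ = φ := by field_simp [hne]
  have hii : φ * (x^2 - 1) ≤ -x^3 * Φ := by
    calc φ * (x^2 - 1) = -x^3 * (φ * (-x⁻¹ + (x^3)⁻¹)) := by
          field_simp [hne]; ring
      _ ≤ -x^3 * Φ := mul_le_mul_of_nonneg_left (millsB x hx0) h3
  have hiii : -x^5 * Φ ≤ φ * (x^4 - x^2 + 3) := by
    calc -x^5 * Φ ≤ -x^5 * (φ * (-x⁻¹ + (x^3)⁻¹ - 3 * (x^5)⁻¹)) :=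
          mul_le_mul_of_nonneg_left (millsC x hx0) h5
      _ = φ * (x^4 - x^2 + 3) := by field_simp [hne]; ring
  have hD : (0:ℝ) < x^4 - x^2 + 3 := by nlinarith [sq_nonneg (x^2 - 1)]
  have hΦ2 : (0:ℝ) < Φ^2 := by positivity
  have hsq : (0:ℝ) < (x^2 - 1)^2 := pow_pos hx2 2
  constructor
  · rw [G, div_le_div_iff₀ hD hΦ2]
    have p1 : φ * (-x^5 * Φ) ≤ φ * (φ * (x^4 - x^2 + 3)) :=
      mul_le_mul_of_nonneg_left hiii hφ.le
    have h3x : (0:ℝ) ≤ 3*x - x^3 := by nlinarith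
    have p2 : (Φ * (3*x - x^3)) * (-x * Φ) ≤ (Φ * (3*x - x^3)) * φ :=
      mul_le_mul_of_nonneg_left hi (mul_nonneg hΦ.le h3x)
    nlinarith [p1, p2]
  · rw [G, div_le_div_iff₀ hΦ2 hsq]
    have q0 : (0:ℝ) ≤ x * Φ + φ := by nlinarith
    have q1 : (x * Φ + φ) * (x^2 - 1) ≤ -x * Φ := by nlinarith [hii]
    have h2n : (0:ℝ) ≤ (x * Φ + φ) * (x^2 - 1) := mul_nonneg q0 hx2.le
    have h3n : (0:ℝ) ≤ -x^3 * Φ := mul_nonneg h3 hΦ.le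
    have q2 : (φ * (x^2 - 1)) * ((x * Φ + φ) * (x^2 - 1)) ≤ (-x^3 * Φ) * (-x * Φ) :=
      mul_le_mul hii q1 h2n h3n
    nlinarith [q2]

lemma tendsto_lower : Tendsto (fun x : ℝ => (x^4 - 3*x^2)/(x^4 - x^2 + 3)) atBot (nhds 1) := by
  have h : Tendsto (fun x : ℝ => (1 - 3*(x^2)⁻¹)/(1 - (x^2)⁻¹ + 3*(x^4)⁻¹)) atBot (nhds 1) := by
    have hnum : Tendsto (fun x : ℝ => 1 - 3*(x^2)⁻¹) atBot (nhds 1) := by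
      have := ((tendsto_inv_pow_atBot 2 (by norm_num)).const_mul 3).const_sub 1
      simpa using this
    have hden : Tendsto (fun x : ℝ => 1 - (x^2)⁻¹ + 3*(x^4)⁻¹) atBot (nhds 1) := by
      have := ((tendsto_inv_pow_atBot 2 (by norm_num)).const_sub 1).add
        ((tendsto_inv_pow_atBot 4 (by norm_num)).const_mul 3)
      simpa using this
    have := hnum.div hden (by norm_num)
    simpa [Pi.div_def] using this
  refine h.congr' ?_
  filter_upwards [eventually_lt_atBot (0:ℝ)] with x hx
  have hx0 : x ≠ 0 := hx.ne
  have hD : (0:ℝ) < x^4 - x^2 + 3 := by nlinarith [sq_nonneg (x^2 - 1)]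
  have hB : (1 - (x^2)⁻¹ + 3*(x^4)⁻¹) ≠ 0 := by
    intro h
    have hmul : (1 - (x^2)⁻¹ + 3*(x^4)⁻¹) * x^4 = x^4 - x^2 + 3 := by
      field_simp [hx0]
    rw [h, zero_mul] at hmul; linarith
  rw [div_eq_div_iff hB hD.ne']
  field_simp [hx0]

lemma tendsto_upper : Tendsto (fun x : ℝ => x^4/(x^2-1)^2) atBot (nhds 1) := by
  have h : Tendsto (fun x : ℝ => ((1 - (x^2)⁻¹)^2)⁻¹) atBot (nhds 1) := by
    have hb : Tendsto (fun x : ℝ => (1 - (x^2)⁻¹)^2) atBot (nhds 1) := by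
      have := ((tendsto_inv_pow_atBot 2 (by norm_num)).const_sub 1).pow 2
      simpa using this
    have := hb.inv₀ (by norm_num)
    simpa using this
  refine h.congr' ?_
  filter_upwards [eventually_le_atBot (-2:ℝ)] with x hx
  have hx0 : x ≠ 0 := by intro h; rw [h] at hx; norm_num at hx
  have hsq : (0:ℝ) < x^2 - 1 := by nlinarith [sq_nonneg (x+2)]
  have hB : (1 - (x^2)⁻¹) ≠ 0 := by
    intro h
    have hmul : (1 - (x^2)⁻¹) * x^2 = x^2 - 1 := by field_simp [hx0]
    rw [h, zero_mul] at hmul; linarith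
  rw [inv_eq_iff_eq_inv, eq_comm, inv_div]
  field_simp [hx0]

/-- Limits of `G` at `−∞` and `+∞` (inside the proof of Lemma 3): `G(x) → 1` as `x → −∞`
and `G(x) → 0` as `x → +∞`. -/
theorem stmt7 :
    Filter.Tendsto G Filter.atBot (nhds 1) ∧ Filter.Tendsto G Filter.atTop (nhds 0) := by
  constructor
  · refine tendsto_of_tendsto_of_tendsto_of_le_of_le' tendsto_lower tendsto_upper ?_ ?_
    · filter_upwards [eventually_le_atBot (-2:ℝ)] with x hx
      exact (G_bounds hx).1
    · filter_upwards [eventually_le_atBot (-2:ℝ)] with x hx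
      exact (G_bounds hx).2
  · have hnum : Tendsto (fun x => x * gaussPDF x * gaussCDF x + (gaussPDF x)^2) atTop (nhds 0) := by
      have := (tendsto_mul_gaussPDF_atTop.mul tendsto_gaussCDF_atTop).add
        (tendsto_gaussPDF_atTop.pow 2)
      simpa using this
    have hden : Tendsto (fun x => (gaussCDF x)^2) atTop (nhds 1) := by
      have := tendsto_gaussCDF_atTop.pow 2
      simpa using this
    have := hnum.div hden one_ne_zero
    delta G
    simpa [G, Pi.div_def] using this
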